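/- For c > 0 and M ∈ PSD(d), and for every orthogonal Q ∈ O(d), log det(I + c M) ≤ ∑_{i=1}^d log(1 + c (Qᵀ M Q)_{ii}), with equality if and only if Qᵀ M Q is diagonal. -/

import Mathlib

open Matrix BigOperators

lemma posDef_diag_pos {d : ℕ} {A : Matrix (Fin d) (Fin d) ℝ} (hA : A.PosDef) (i : Fin d) :
    0 < A i i := by
  have h := (posDef_iff_dotProduct_mulVec.mp hA).2 (x := Pi.single i 1) (by
    intro h
    have := congrFun h i
    simp at this)
  simpa [dotProduct, mulVec, Pi.single_apply, Finset.mul_sum, mul_ite] using h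

/-- Hadamard's inequality in log form, with the equality case. -/
lemma hadamard_log {d : ℕ} {A : Matrix (Fin d) (Fin d) ℝ} (hA : A.PosDef) :
    Real.log A.det ≤ ∑ i, Real.log (A i i) ∧
      (Real.log A.det = ∑ i, Real.log (A i i) ↔ A.IsDiag) := by
  have ha : ∀ i, 0 < A i i := posDef_diag_pos hA
  set e : Fin d → ℝ := fun i => (Real.sqrt (A i i))⁻¹ with he_def
  have he : ∀ i, 0 < e i := fun i => inv_pos.2 (Real.sqrt_pos.2 (ha i))
  have he2 : ∀ i, e i * e i * A i i = 1 := by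
    intro i
    have h1 : Real.sqrt (A i i) * Real.sqrt (A i i) = A i i := Real.mul_self_sqrt (ha i).le
    show (Real.sqrt (A i i))⁻¹ * (Real.sqrt (A i i))⁻¹ * A i i = 1
    rw [← mul_inv, h1]
    exact inv_mul_cancel₀ (ha i).ne'
  set B : Matrix (Fin d) (Fin d) ℝ := diagonal e * A * diagonal e with hB_def
  have hBij : ∀ i j, B i j = e i * A i j * e j := by
    intro i j
    rw [hB_def, Matrix.mul_diagonal, Matrix.diagonal_mul]
  have hBdiag : ∀ i, B i i = 1 := by
    intro i
    rw [hBij]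
    linear_combination he2 i
  -- B is positive definite
  have hB : B.PosDef := by
    refine posDef_iff_dotProduct_mulVec.mpr ⟨?_, ?_⟩
    · ext i j
      have hsym : A j i = A i j := by
        have : A i j = A j i := by simpa using hA.1.apply j i
        exact this.symm
      simp only [conjTranspose_apply, hBij, star_trivial, hsym]
      ring
    · intro x hx
      set y : Fin d → ℝ := fun i => e i * x i with hy_def
      have hy : y ≠ 0 := by
        intro h
        apply hx
        funext i
        have := congrFun h i
        simp only [hy_def, Pi.zero_apply] at this ⊢
        rcases mul_eq_zero.mp this with h' | h'
        · exact absurd h' (he i).ne'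
        · exact h'
      have hv : diagonal e *ᵥ x = y := by
        funext i
        rw [Matrix.mulVec_diagonal]
      have hBx : B *ᵥ x = diagonal e *ᵥ (A *ᵥ y) := by
        rw [hB_def, ← Matrix.mulVec_mulVec, ← Matrix.mulVec_mulVec, hv]
      have key : star x ⬝ᵥ (B *ᵥ x) = star y ⬝ᵥ (A *ᵥ y) := by
        rw [hBx]
        simp only [dotProduct, Matrix.mulVec_diagonal, star_trivial, hy_def]
        exact Finset.sum_congr rfl fun i _ => by ring
      rw [key]
      exact (posDef_iff_dotProduct_mulVec.mp hA).2 hy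
  have hBH : B.IsHermitian := hB.1
  set lam : Fin d → ℝ := hBH.eigenvalues with hlam_def
  have hlampos : ∀ i, 0 < lam i := hB.eigenvalues_pos
  have hdetB : B.det = ∏ i, lam i := by
    simpa using hBH.det_eq_prod_eigenvalues
  -- trace of B is both d and the sum of eigenvalues
  have htrB : B.trace = ∑ i, lam i := by
    have hspec := hBH.spectral_theorem
    rw [Unitary.conjStarAlgAut_apply] at hspec
    set U : Matrix (Fin d) (Fin d) ℝ := (hBH.eigenvectorUnitary : Matrix (Fin d) (Fin d) ℝ)
      with hU_def
    have hU1 : star U * U = 1 := Unitary.coe_star_mul_self hBH.eigenvectorUnitary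
    calc B.trace = (U * diagonal (RCLike.ofReal ∘ hBH.eigenvalues) * star U).trace := by
          rw [← hspec]
      _ = (star U * (U * diagonal (RCLike.ofReal ∘ hBH.eigenvalues))).trace := by
          rw [Matrix.trace_mul_comm]
      _ = (diagonal (RCLike.ofReal ∘ hBH.eigenvalues)).trace := by
          rw [← mul_assoc, hU1, one_mul]
      _ = ∑ i, lam i := by simp [Matrix.trace_diagonal, hlam_def]
  have htrB' : B.trace = (d : ℝ) := by
    simp [Matrix.trace, Matrix.diag, hBdiag]
  have hsumlam : ∑ i, lam i = (d : ℝ) := by rw [← htrB, htrB']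
  -- det A = det B * ∏ diag
  have hprod1 : (∏ i, e i) * (∏ i, e i) * (∏ i, A i i) = 1 := by
    rw [← Finset.prod_mul_distrib, ← Finset.prod_mul_distrib]
    exact Finset.prod_eq_one fun i _ => he2 i
  have hdetB' : B.det = (∏ i, e i) * A.det * (∏ i, e i) := by
    rw [hB_def, Matrix.det_mul, Matrix.det_mul, Matrix.det_diagonal]
  have hdetA : A.det = B.det * ∏ i, A i i := by
    calc A.det = A.det * ((∏ i, e i) * (∏ i, e i) * (∏ i, A i i)) := by rw [hprod1, mul_one]
      _ = B.det * ∏ i, A i i := by rw [hdetB']; ring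
  have hprodA_pos : 0 < ∏ i, A i i := Finset.prod_pos fun i _ => ha i
  have hlogA : Real.log A.det = (∑ i, Real.log (lam i)) + ∑ i, Real.log (A i i) := by
    rw [hdetA, Real.log_mul hB.det_pos.ne' hprodA_pos.ne', hdetB,
      Real.log_prod (fun i _ => (hlampos i).ne'),
      Real.log_prod (fun i _ => (ha i).ne')]
  have hle : ∀ i ∈ Finset.univ (α := Fin d), Real.log (lam i) ≤ lam i - 1 :=
    fun i _ => Real.log_le_sub_one_of_pos (hlampos i)
  have hsum_sub : ∑ i, (lam i - 1) = 0 := by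
    rw [Finset.sum_sub_distrib, hsumlam]
    simp
  have hloglam_le : ∑ i, Real.log (lam i) ≤ 0 := by
    calc ∑ i, Real.log (lam i) ≤ ∑ i, (lam i - 1) := Finset.sum_le_sum hle
      _ = 0 := hsum_sub
  constructor
  · rw [hlogA]
    linarith [hloglam_le]
  · constructor
    · intro heq
      -- then ∑ log lam = 0 = ∑ (lam - 1), so termwise equality, so lam i = 1
      have h0 : ∑ i, Real.log (lam i) = 0 := by
        rw [hlogA] at heq
        linarith [heq]
      have hterm : ∀ i ∈ Finset.univ (α := Fin d), Real.log (lam i) = lam i - 1 := by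
        rw [← Finset.sum_eq_sum_iff_of_le hle, h0, hsum_sub]
      have hlam1 : ∀ i, lam i = 1 := by
        intro i
        by_contra hne
        exact absurd (hterm i (Finset.mem_univ i))
          (ne_of_lt (Real.log_lt_sub_one_of_pos (hlampos i) hne))
      -- B = 1
      have hD1 : diagonal (RCLike.ofReal ∘ hBH.eigenvalues) = (1 : Matrix (Fin d) (Fin d) ℝ) := by
        have : (RCLike.ofReal ∘ hBH.eigenvalues : Fin d → ℝ) = fun _ => 1 := by
          funext i
          simp [Function.comp, ← hlam_def, hlam1 i]
        rw [this, Matrix.diagonal_one]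
      have hB1 : B = 1 := by
        have hspec := hBH.spectral_theorem
        rw [Unitary.conjStarAlgAut_apply] at hspec
        rw [hD1, mul_one] at hspec
        rw [hspec]
        exact Unitary.coe_mul_star_self hBH.eigenvectorUnitary
      intro i j hij
      have hBij0 : B i j = 0 := by rw [hB1]; exact Matrix.one_apply_ne hij
      rw [hBij] at hBij0
      rcases mul_eq_zero.mp hBij0 with h' | h'
      · rcases mul_eq_zero.mp h' with h'' | h''
        · exact absurd h'' (he i).ne'
        · exact h''
      · exact absurd h' (he j).ne'
    · intro hD
      have hAdiag : diagonal A.diag = A := hD.diagonal_diag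
      have : A.det = ∏ i, A i i := by
        conv_lhs => rw [← hAdiag, Matrix.det_diagonal]
        rfl
      rw [this, Real.log_prod (fun i _ => (ha i).ne')]

theorem stmt9 {d : ℕ} (c : ℝ) (hc : 0 < c)
    (M : Matrix (Fin d) (Fin d) ℝ) (hM : M.PosSemidef)
    (Q : Matrix (Fin d) (Fin d) ℝ) (hQ : Qᵀ * Q = 1) :
    Real.log (1 + c • M).det ≤ ∑ i, Real.log (1 + c * (Qᵀ * M * Q) i i) ∧
    (Real.log (1 + c • M).det = ∑ i, Real.log (1 + c * (Qᵀ * M * Q) i i) ↔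
      (Qᵀ * M * Q).IsDiag) := by
  set N : Matrix (Fin d) (Fin d) ℝ := Qᵀ * M * Q with hN_def
  have hQH : Qᴴ = Qᵀ := by
    ext i j
    simp [conjTranspose_apply]
  have hN : N.PosSemidef := by
    rw [hN_def, ← hQH]
    exact hM.conjTranspose_mul_mul_same Q
  have hcN : (c • N).PosSemidef := by
    refine posSemidef_iff_dotProduct_mulVec.mpr ⟨?_, ?_⟩
    · ext i j
      have := hN.1.apply j i
      simp only [conjTranspose_apply, Matrix.smul_apply, star_trivial, smul_eq_mul] at this ⊢
      rw [this]
    · intro x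
      rw [Matrix.smul_mulVec, dotProduct_smul]
      exact smul_nonneg hc.le ((posSemidef_iff_dotProduct_mulVec.mp hN).2 x)
  have hA : ((1 : Matrix (Fin d) (Fin d) ℝ) + c • N).PosDef :=
    Matrix.PosDef.add_posSemidef Matrix.PosDef.one hcN
  set A : Matrix (Fin d) (Fin d) ℝ := 1 + c • N with hA_def
  -- determinants agree
  have hconj : Qᵀ * ((1 : Matrix (Fin d) (Fin d) ℝ) + c • M) * Q = A := by
    rw [hA_def, hN_def]
    rw [Matrix.mul_add, Matrix.add_mul, Matrix.mul_one, hQ]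
    congr 1
    rw [Matrix.mul_smul, Matrix.smul_mul, Matrix.mul_assoc]
  have hdet : ((1 : Matrix (Fin d) (Fin d) ℝ) + c • M).det = A.det := by
    have h1 : (Qᵀ * ((1 : Matrix (Fin d) (Fin d) ℝ) + c • M) * Q).det
        = Qᵀ.det * ((1 : Matrix (Fin d) (Fin d) ℝ) + c • M).det * Q.det := by
      rw [Matrix.det_mul, Matrix.det_mul]
    have h2 : Qᵀ.det * Q.det = 1 := by
      rw [← Matrix.det_mul, hQ, Matrix.det_one]
    rw [hconj] at h1
    rw [h1, Matrix.det_transpose]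
    rw [Matrix.det_transpose] at h2
    linear_combination (-(1 + c • M).det) * h2
  have hAdiag : ∀ i, A i i = 1 + c * N i i := by
    intro i
    simp [hA_def, Matrix.add_apply, Matrix.one_apply_eq, Matrix.smul_apply]
  obtain ⟨hineq, hiff⟩ := hadamard_log hA
  have hsum_eq : ∑ i, Real.log (A i i) = ∑ i, Real.log (1 + c * N i i) :=
    Finset.sum_congr rfl fun i _ => by rw [hAdiag i]
  have hdiag_iff : A.IsDiag ↔ N.IsDiag := by
    constructor
    · intro h i j hij
      have := h hij
      simp only [hA_def, Matrix.add_apply, Matrix.one_apply_ne hij, Matrix.smul_apply,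
        smul_eq_mul, zero_add] at this
      rcases mul_eq_zero.mp this with h' | h'
      · exact absurd h' hc.ne'
      · exact h'
    · intro h i j hij
      simp [hA_def, Matrix.add_apply, Matrix.one_apply_ne hij, Matrix.smul_apply, h hij]
  rw [hdet, ← hsum_eq]
  exact ⟨hineq, hiff.trans hdiag_iff⟩
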